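/- Assume m′+d > r. For every path p ∈ X_d(m,m′), every 1 ≤ i ≤ d and every 1 ≤ s ≤ m−m′: if k^{(s)}_i is unbarred then l^{(s)}_i = k^{(s)}_i + s − i − 1, and if k^{(s)}_i is barred then l^{(s)}_i = s − i + r. -/

import Mathlib

noncomputable section
open Matrix BigOperators

namespace CTypeMinors

/-- Standard basis vector of `ℂ^{2r}`, indexed by a natural number `a` (0-indexed):
`a = j - 1` encodes the unbarred element `j ∈ J`, and `a = 2r - j` encodes the barred
element `j̄ ∈ J` (this is the bijection `ι` shifted to be 0-indexed; the natural order
on `{0, …, 2r-1}` corresponds to the total order on `J`). -/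
def vv (r a : ℕ) : Fin (2*r) → ℂ := fun k => if (k : ℕ) = a then 1 else 0

/-- `v_j` for unbarred `j` (`1 ≤ j ≤ r`); note `vu r (r+1) = v_{r̄}`. -/
def vu (r j : ℕ) : Fin (2*r) → ℂ := vv r (j - 1)

/-- `v_{j̄}` for barred `j̄` (`1 ≤ j ≤ r`). -/
def vb (r j : ℕ) : Fin (2*r) → ℂ := vv r (2*r - j)

/-- The matrix `f_i` (`1 ≤ i ≤ r`): `f_i v_i = v_{i+1}`, `f_i v_{(i+1)‾} = v_{ī}`
(for `i = r` these two conditions both read `f_r v_r = v_{r̄}`), all other basis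
vectors are sent to `0`. -/
def fMat (r i : ℕ) : Matrix (Fin (2*r)) (Fin (2*r)) ℂ :=
  Matrix.of fun k l =>
    if ((l : ℕ) + 1 = i ∧ (k : ℕ) = i) ∨ ((l : ℕ) + i + 1 = 2*r ∧ (k : ℕ) + i = 2*r)
    then 1 else 0

/-- `e_i = f_iᵀ`. -/
def eMat (r i : ℕ) : Matrix (Fin (2*r)) (Fin (2*r)) ℂ := (fMat r i)ᵀ

/-- `x_i(t) = 1 + t e_i`. -/
def xMat (r i : ℕ) (t : ℂ) : Matrix (Fin (2*r)) (Fin (2*r)) ℂ := 1 + t • eMat r i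

/-- `y_i(t) = 1 + t f_i`. -/
def yMat (r i : ℕ) (t : ℂ) : Matrix (Fin (2*r)) (Fin (2*r)) ℂ := 1 + t • fMat r i

/-- `α_i^∨(c)`: diagonal, acting by `c` on `v_i, v_{(i+1)‾}`, by `c⁻¹` on
`v_{i+1}, v_{ī}`, and by `1` elsewhere (for `i = r`: by `c` on `v_r`, `c⁻¹` on `v_{r̄}`). -/
def alMat (r i : ℕ) (c : ℂ) : Matrix (Fin (2*r)) (Fin (2*r)) ℂ :=
  Matrix.diagonal fun k =>
    if (k : ℕ) + 1 = i ∨ (k : ℕ) + i + 1 = 2*r then c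
    else if (k : ℕ) = i ∨ (k : ℕ) + i = 2*r then c⁻¹
    else 1

/-- `x_{-i}(t) = y_i(t) ⬝ α_i^∨(t⁻¹)`. -/
def xmMat (r i : ℕ) (t : ℂ) : Matrix (Fin (2*r)) (Fin (2*r)) ℂ :=
  yMat r i t * alMat r i t⁻¹

/-- Entry of a `2r × 2r` matrix at (0-indexed) natural number indices. -/
def ent {r : ℕ} (X : Matrix (Fin (2*r)) (Fin (2*r)) ℂ) (a b : ℕ) : ℂ :=
  dotProduct (vv r a) (X.mulVec (vv r b))

/-- Ordered product `g 1 * g 2 * ⋯ * g n` of matrices. -/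
def oprod {N : ℕ} (g : ℕ → Matrix (Fin N) (Fin N) ℂ) (n : ℕ) : Matrix (Fin N) (Fin N) ℂ :=
  ((List.range n).map fun l => g (l + 1)).prod

/-- `x^L(Y) = (x_{-1}(Y_{1,1})⋯x_{-r}(Y_{1,r})) ⋯ x_{-1}(Y_{m,1})⋯x_{-d}(Y_{m,d})`. -/
def xL (r m d : ℕ) (Y : ℕ → ℕ → ℂ) : Matrix (Fin (2*r)) (Fin (2*r)) ℂ :=
  oprod (fun s => oprod (fun l => xmMat r l (Y s l)) (if s = m then d else r)) m

/-- The 0-indexed row `ι(R_i)` for `i : Fin d` (0-indexed `i`): the `i`-th entry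
of `R` is `v_{m'+1+i}` when `(i+1) + m' ≤ r` and `v_{(d-i)‾}` otherwise. -/
def rowR (r m' d i : ℕ) : ℕ := if i + 1 + m' ≤ r then m' + i else 2*r + i - d

/-- `Δ^L(Y)`: determinant of the `d × d` submatrix of `x^L(Y)` with rows `ι(R)` and
columns `1, …, d`. -/
def DeltaL (r m m' d : ℕ) (Y : ℕ → ℕ → ℂ) : ℂ :=
  (Matrix.of fun i j : Fin d => ent (xL r m d Y) (rowR r m' d (i : ℕ)) (j : ℕ)).det

/-- `C̄(l,k) = Y_{l,k-1}/Y_{l,k}`. -/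
def Cbar (Y : ℕ → ℕ → ℂ) (l k : ℕ) : ℂ := Y l (k - 1) / Y l k

/-- `C(l,k) = Y_{l,k+1}/Y_{l+1,k}`. -/
def Cc (Y : ℕ → ℕ → ℂ) (l k : ℕ) : ℂ := Y l (k + 1) / Y (l + 1) k

/-- `|·| : J → ℕ` in the 0-indexed natural encoding of `J`. -/
def absV (r p : ℕ) : ℕ := if p < r then p + 1 else 2*r - p


/-- `A` encodes a path `p ∈ X_d(m,m')` (Definition 6.2): `A s i` (for `0 ≤ s ≤ m`,
`1 ≤ i ≤ d`) is the 0-indexed natural encoding of `a^{(s)}_i ∈ J` (unbarred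
`j ↦ j - 1`, barred `j̄ ↦ 2r - j`; the order of `J` is the natural order, and an
element is barred iff its encoding is `≥ r`).  The five clauses are conditions
(i)+(ii), (iii), (iv) (twice) and (v) of Definition 6.2. -/
def IsPath (r m m' d : ℕ) (A : ℕ → ℕ → ℕ) : Prop :=
  (∀ s, s ≤ m → ∀ i, 1 ≤ i → i ≤ d → A s i < 2*r) ∧
  (∀ s, s ≤ m → ∀ i, 1 ≤ i → i < d → A s i < A s (i+1)) ∧
  (∀ s, s < m → ∀ i, 1 ≤ i → i ≤ d →
      (A s i + 1 < r → (A (s+1) i = A s i ∨ A (s+1) i = A s i + 1)) ∧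
      A s i ≤ A (s+1) i) ∧
  (∀ i, 1 ≤ i → i ≤ d → A 0 i = i - 1 ∧ A m i = rowR r m' d (i - 1)) ∧
  (∀ s, s < m → ∀ i, 1 ≤ i → i < d → r ≤ A (s+1) i →
      absV r (A s (i+1)) < absV r (A (s+1) i))

/-- The set `{l^{(1)}_i, …, l^{(m-m')}_i}` attached to (the `i`-th sequence of) a
path, as in (6.11), (6.12). -/
def lSet (r m m' : ℕ) (A : ℕ → ℕ → ℕ) (i : ℕ) : Finset ℕ :=
  if i + m' ≤ r then (Finset.range m).filter (fun s => A s i = A (s+1) i)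
  else (Finset.range (m + r + 1 - (i + m'))).filter
         (fun s => (A s i < r ∧ A s i = A (s+1) i) ∨ r ≤ A s i)

/-- `l^{(s)}_i` (for `1 ≤ s ≤ m-m'`): the `s`-th smallest element of `lSet`. -/
def lv (r m m' : ℕ) (A : ℕ → ℕ → ℕ) (i s : ℕ) : ℕ :=
  ((lSet r m m' A i).sort (· ≤ ·)).getD (s - 1) 0

/-- `k^{(s)}_i := a^{(l^{(s)}_i)}_i`. -/
def kv (r m m' : ℕ) (A : ℕ → ℕ → ℕ) (i s : ℕ) : ℕ := A (lv r m m' A i s) i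

/-- `δ_i`: the number of `s ∈ {1, …, m-m'}` with `k^{(s)}_i` unbarred. -/
def dv (r m m' : ℕ) (A : ℕ → ℕ → ℕ) (i : ℕ) : ℕ :=
  ((Finset.Icc 1 (m - m')).filter (fun s => kv r m m' A i s < r)).card


/-! ### Auxiliary material for the proof -/

/-- Generic fact: the `k`-th element (0-indexed) of the sorted list of a finset of
naturals belongs to the set and has exactly `k` elements of the set below it. -/
lemma sort_getD_spec (S : Finset ℕ) (k : ℕ) (hk : k < S.card) :
    (S.sort (· ≤ ·)).getD k 0 ∈ S ∧
      (S.filter (· < (S.sort (· ≤ ·)).getD k 0)).card = k := by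
  set L := S.sort (· ≤ ·) with hL
  have hlen : L.length = S.card := S.length_sort _
  have hk' : k < L.length := by omega
  have hs : L.SortedLT := S.sortedLT_sort
  have hgetD : L.getD k 0 = L.get ⟨k, hk'⟩ := by
    rw [List.getD_eq_getElem L 0 hk']; simp
  set e := L.getD k 0 with he
  have hmem : e ∈ S := by
    rw [← Finset.mem_sort (· ≤ ·), hgetD]; exact L.get_mem _
  refine ⟨hmem, ?_⟩
  have hset : S.filter (· < e) =
      (Finset.range k).image (fun j => L.getD j 0) := by
    ext x
    simp only [Finset.mem_filter, Finset.mem_image, Finset.mem_range]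
    constructor
    · rintro ⟨hxS, hxe⟩
      rw [← Finset.mem_sort (· ≤ ·) (s := S)] at hxS
      obtain ⟨j, hx⟩ := List.mem_iff_get.1 hxS
      refine ⟨j, ?_, ?_⟩
      · by_contra hjk
        push_neg at hjk
        have : e ≤ x := by
          rcases eq_or_lt_of_le hjk with h | h
          · rw [hgetD, ← hx]; simp [Fin.ext_iff, ← h]; exact le_rfl
          · exact le_of_lt (by rw [hgetD, ← hx]; exact hs.strictMono_get h)
        omega
      · have hjl : j.1 < L.length := j.2
        rw [List.getD_eq_getElem L 0 hjl, ← hx]; simp; rfl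
    · rintro ⟨j, hjk, hx⟩
      have hjL : j < L.length := lt_trans hjk hk'
      have hxg : x = L.get ⟨j, hjL⟩ := by
        rw [← hx, List.getD_eq_getElem L 0 hjL]; simp
      constructor
      · rw [← Finset.mem_sort (· ≤ ·) (s := S), hxg]; exact L.get_mem _
      · rw [hxg, hgetD]; exact hs.strictMono_get hjk
  rw [hset, Finset.card_image_of_injOn, Finset.card_range]
  intro a ha b hb hab
  simp only at hab
  simp only [Finset.coe_range, Set.mem_Iio] at ha hb
  have haL : a < L.length := lt_trans ha hk'
  have hbL : b < L.length := lt_trans hb hk'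
  rw [List.getD_eq_getElem L 0 haL, List.getD_eq_getElem L 0 hbL] at hab
  by_contra hne
  rcases Nat.lt_or_ge a b with h | h
  · have := hs.strictMono_get (show (⟨a, haL⟩ : Fin L.length) < ⟨b, hbL⟩ from h)
    simp only [List.get_eq_getElem] at this; omega
  · have h' : b < a := by omega
    have := hs.strictMono_get (show (⟨b, hbL⟩ : Fin L.length) < ⟨a, haL⟩ from h')
    simp only [List.get_eq_getElem] at this; omega

/-- The predicate defining membership in `lSet` (in the second case). -/
def pathP (r : ℕ) (A : ℕ → ℕ → ℕ) (i t : ℕ) : Prop :=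
  (A t i < r ∧ A t i = A (t+1) i) ∨ r ≤ A t i

instance pathP.dec (r : ℕ) (A : ℕ → ℕ → ℕ) (i t : ℕ) : Decidable (pathP r A i t) := by
  unfold pathP; infer_instance

/-- Number of steps before `l` that are NOT in the `lSet` pattern. -/
def uct (r : ℕ) (A : ℕ → ℕ → ℕ) (i l : ℕ) : ℕ :=
  ((Finset.range l).filter (fun t => ¬ pathP r A i t)).card

/- **Statement 13** (Lemma 6.15 (i)): if `k^{(s)}_i` is unbarred (encoding `< r`,
`J`-value `kv + 1`) then `l^{(s)}_i = k^{(s)}_i + s - i - 1`, i.e.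
`lv + i = kv + s`; if `k^{(s)}_i` is barred then `l^{(s)}_i = s - i + r`, i.e.
`lv + i = s + r`. -/
theorem path_l_formula
    (r m m' d : ℕ) (hr : 2 ≤ r) (hm'1 : 1 ≤ m') (hm'm : m' ≤ m) (hmr : m ≤ r)
    (hd1 : 1 ≤ d) (hdr : d ≤ r) (hbig : r < m' + d)
    (A : ℕ → ℕ → ℕ) (hA : IsPath r m m' d A) :
    ∀ i, 1 ≤ i → i ≤ d → ∀ s, 1 ≤ s → s ≤ m - m' →
      (kv r m m' A i s < r → lv r m m' A i s + i = kv r m m' A i s + s) ∧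
      (r ≤ kv r m m' A i s → lv r m m' A i s + i = s + r) := by
  obtain ⟨hbd, hinc, hstep, hends, hcond5⟩ := hA
  intro i hi1 hid s hs1 hsm
  have hA0 : A 0 i = i - 1 := (hends i hi1 hid).1
  have hAm : A m i = rowR r m' d (i - 1) := (hends i hi1 hid).2
  -- monotonicity in s
  have hmono : ∀ b, b ≤ m → ∀ a, a ≤ b → A a i ≤ A b i := by
    intro b
    induction b with
    | zero =>
        intro _ a ha
        have : a = 0 := by omega
        rw [this]
    | succ b ih =>
        intro hb a ha
        rcases Nat.lt_or_ge a (b+1) with h | h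
        · have h1 : A a i ≤ A b i := ih (by omega) a (by omega)
          have h2 : A b i ≤ A (b+1) i := (hstep b (by omega) i hi1 hid).2
          omega
        · have : a = b + 1 := by omega
          rw [this]
  set N : ℕ := if i + m' ≤ r then m else m + r + 1 - (i + m') with hN
  have hNm : N ≤ m := by rw [hN]; split <;> omega
  have hu0 : uct r A i 0 = 0 := by simp [uct]
  have husucc : ∀ l, uct r A i (l+1) = uct r A i l + (if pathP r A i l then 0 else 1) := by
    intro l
    unfold uct
    rw [Finset.range_add_one, Finset.filter_insert]
    by_cases h : pathP r A i l
    · rw [if_neg (by simp [h]), if_pos h, Nat.add_zero]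
    · rw [if_pos (by simp [h]), if_neg h,
        Finset.card_insert_of_notMem (by simp)]
  -- key invariant
  have hI : ∀ l, l ≤ m → (A l i < r → A l i + 1 = i + uct r A i l) ∧
      (r ≤ A l i → uct r A i l + i = r + 1) := by
    intro l
    induction l with
    | zero =>
        intro _
        constructor
        · intro _; rw [hA0, hu0]; omega
        · intro h; rw [hA0] at h; omega
    | succ l ih =>
        intro hl
        have hlm : l < m := by omega
        have ih' := ih (by omega)
        have hst := hstep l hlm i hi1 hid
        have hus := husucc l
        by_cases hPl : pathP r A i l
        · rw [if_pos hPl] at hus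
          unfold pathP at hPl
          rcases hPl with ⟨h1, h2⟩ | h1
          · constructor
            · intro _; rw [hus, ← h2]; exact ih'.1 h1
            · intro h; rw [← h2] at h; omega
          · have h2 : r ≤ A (l+1) i := le_trans h1 hst.2
            refine ⟨fun h => absurd h (by omega), fun _ => ?_⟩
            rw [hus]; exact ih'.2 h1
        · rw [if_neg hPl] at hus
          unfold pathP at hPl
          push_neg at hPl
          obtain ⟨hPl1, hPl2⟩ := hPl
          have hAl : A l i < r := by omega
          have hne : A l i ≠ A (l+1) i := hPl1 hAl
          have hval := ih'.1 hAl
          rcases Nat.lt_or_ge (A l i + 1) r with hc | hc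
          · have hd2 := hst.1 hc
            have hA1 : A (l+1) i = A l i + 1 := by omega
            constructor
            · intro _; omega
            · intro h; omega
          · have hAlr : A l i = r - 1 := by omega
            have hb : r ≤ A (l+1) i := by
              have := hst.2; omega
            constructor
            · intro h; omega
            · intro _; omega
  have hubd : ∀ l, l ≤ m → uct r A i l + i ≤ r + 1 := by
    intro l hl
    have h := hI l hl
    rcases Nat.lt_or_ge (A l i) r with hc | hc
    · have := h.1 hc; omega
    · have := h.2 hc; omega
  -- lSet = filter (pathP) (range N)
  have hlSet : lSet r m m' A i = (Finset.range N).filter (pathP r A i) := by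
    rw [lSet, hN]
    split
    · next hcase =>
        ext t
        simp only [Finset.mem_filter, Finset.mem_range, pathP]
        constructor
        · rintro ⟨ht, h⟩
          have h1 : A t i ≤ A m i := hmono m le_rfl t (by omega)
          have h3 : A m i < r := by
            rw [hAm, rowR, if_pos (by omega : i - 1 + 1 + m' ≤ r)]; omega
          exact ⟨ht, Or.inl ⟨by omega, h⟩⟩
        · rintro ⟨ht, h⟩
          refine ⟨ht, ?_⟩
          have h2 : A (t+1) i ≤ A m i := hmono m le_rfl (t+1) (by omega)
          have h3 : A m i < r := by
            rw [hAm, rowR, if_pos (by omega : i - 1 + 1 + m' ≤ r)]; omega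
          have h1 : A t i ≤ A m i := hmono m le_rfl t (by omega)
          rcases h with ⟨_, h⟩ | h
          · exact h
          · omega
    · next hcase =>
        ext t
        simp only [Finset.mem_filter, Finset.mem_range, pathP]
  -- cardinality
  have hcardsplit : ∀ l, ((Finset.range l).filter (pathP r A i)).card + uct r A i l = l := by
    intro l
    unfold uct
    rw [Finset.card_filter_add_card_filter_not, Finset.card_range]
  have hcard : m - m' ≤ (lSet r m m' A i).card := by
    rw [hlSet]
    have h1 := hcardsplit N
    rcases le_or_gt (i + m') r with hcase | hcase
    · have hNe : N = m := by rw [hN, if_pos hcase]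
      have hAmr : A m i = m' + (i-1) := by
        rw [hAm, rowR, if_pos (by omega)]
      have := (hI m le_rfl).1 (by omega)
      rw [hNe] at h1 ⊢
      omega
    · have hNe : N = m + r + 1 - (i + m') := by rw [hN, if_neg (by omega)]
      have := hubd N hNm
      omega
  -- apply the generic sorted-list lemma
  have hk : s - 1 < (lSet r m m' A i).card := by omega
  obtain ⟨hmem, hfilt⟩ := sort_getD_spec (lSet r m m' A i) (s-1) hk
  have hlv : lv r m m' A i s = ((lSet r m m' A i).sort (· ≤ ·)).getD (s-1) 0 := rfl
  rw [← hlv] at hmem hfilt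
  set e := lv r m m' A i s with he
  rw [hlSet, Finset.mem_filter, Finset.mem_range] at hmem
  obtain ⟨heN, hPe⟩ := hmem
  have hbelow : (lSet r m m' A i).filter (· < e) = (Finset.range e).filter (pathP r A i) := by
    rw [hlSet]
    ext x
    simp only [Finset.mem_filter, Finset.mem_range]
    constructor
    · rintro ⟨⟨_, hpx⟩, hxe⟩; exact ⟨hxe, hpx⟩
    · rintro ⟨hxe, hpx⟩; exact ⟨⟨by omega, hpx⟩, hxe⟩
  rw [hbelow] at hfilt
  have hEcount : s - 1 + uct r A i e = e := by
    have := hcardsplit e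
    omega
  have hem : e ≤ m := by omega
  have hIe := hI e hem
  have hkv : kv r m m' A i s = A e i := rfl
  rw [hkv]
  constructor
  · intro h; have := hIe.1 h; omega
  · intro h; have := hIe.2 h; omega

end CTypeMinors
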